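/- Let x ∈ (0,1) be non-dyadic with binary zero-position expansion x = Σ_{n=1}^∞ 2^{-a_n}, where (a_n) is a strictly increasing sequence of positive integers. Then the right-hand derivative of the Takagi function at x equals +∞ if and only if a_n - 2n → ∞ as n → ∞. -/

import Mathlib

open Filter Topology Set

noncomputable def tent (x : ℝ) : ℝ := min (2*x) (2-2*x)

noncomputable def takagi (x : ℝ) : ℝ := ∑' n : ℕ, tent^[n+1] x / 2^(n+1)

def IsDyadic (x : ℝ) : Prop := ∃ k : ℤ, ∃ m : ℕ, x = (k : ℝ) / 2^m

lemma tent_mem {y : ℝ} (hy : y ∈ Set.Icc (0:ℝ) 1) : tent y ∈ Set.Icc (0:ℝ) 1 := by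
  obtain ⟨h0, h1⟩ := hy
  constructor
  · simp only [tent, le_min_iff]; constructor <;> linarith
  · rcases le_or_gt y (1/2) with h | h
    · calc tent y ≤ 2*y := min_le_left _ _
        _ ≤ 1 := by linarith
    · calc tent y ≤ 2-2*y := min_le_right _ _
        _ ≤ 1 := by linarith

lemma tent_iter_mem {y : ℝ} (hy : y ∈ Set.Icc (0:ℝ) 1) (n : ℕ) :
    tent^[n] y ∈ Set.Icc (0:ℝ) 1 := by
  induction n with
  | zero => simpa using hy
  | succ n ih => rw [Function.iterate_succ_apply']; exact tent_mem ih

lemma summable_takagi {y : ℝ} (hy : y ∈ Set.Icc (0:ℝ) 1) :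
    Summable (fun n : ℕ => tent^[n+1] y / 2^(n+1)) := by
  apply Summable.of_nonneg_of_le
  · intro n
    have := (tent_iter_mem hy (n+1)).1
    positivity
  · intro n
    have := (tent_iter_mem hy (n+1)).2
    rw [div_le_iff₀ (by positivity)]
    calc tent^[n+1] y ≤ 1 := this
      _ ≤ (1/2:ℝ)^(n+1) * 2^(n+1) := by rw [div_pow, one_pow, div_mul_cancel₀]; positivity
  · exact (summable_geometric_of_lt_one (by norm_num) (by norm_num)).comp_injective
      (add_left_injective 1)

lemma takagi_nonneg {y : ℝ} (hy : y ∈ Set.Icc (0:ℝ) 1) : 0 ≤ takagi y := by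
  apply tsum_nonneg
  intro n
  have := (tent_iter_mem hy (n+1)).1
  positivity

lemma takagi_le_one {y : ℝ} (hy : y ∈ Set.Icc (0:ℝ) 1) : takagi y ≤ 1 := by
  have h1 : takagi y ≤ ∑' n : ℕ, (1/2:ℝ)^(n+1) := by
    apply Summable.tsum_le_tsum _ (summable_takagi hy)
    · exact (summable_geometric_of_lt_one (by norm_num) (by norm_num)).comp_injective
        (add_left_injective 1)
    · intro n
      rw [div_le_iff₀ (by positivity)]
      calc tent^[n+1] y ≤ 1 := (tent_iter_mem hy (n+1)).2
        _ ≤ (1/2:ℝ)^(n+1) * 2^(n+1) := by rw [div_pow, one_pow, div_mul_cancel₀]; positivity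
  have h2 : ∑' n : ℕ, (1/2:ℝ)^(n+1) = 1 := by
    have : ∀ n : ℕ, (1/2:ℝ)^(n+1) = (1/2) * (1/2)^n := fun n => by ring
    rw [tsum_congr this, tsum_mul_left, tsum_geometric_of_lt_one (by norm_num) (by norm_num)]
    norm_num
  linarith

lemma takagi_one : takagi 1 = 0 := by
  have h : ∀ n : ℕ, tent^[n+1] (1:ℝ) = 0 := by
    intro n
    rw [Function.iterate_succ_apply]
    have : tent 1 = 0 := by simp [tent]
    rw [this]
    exact Function.iterate_fixed (by simp [tent]) n
  simp [takagi, h]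

lemma takagi_rec {y : ℝ} (hy : y ∈ Set.Icc (0:ℝ) 1) :
    takagi y = tent y / 2 + takagi (tent y) / 2 := by
  have hty := tent_mem hy
  have h1 : takagi y = ∑' n : ℕ, tent^[n] (tent y) / 2^(n+1) := by
    apply tsum_congr; intro n; rw [Function.iterate_succ_apply]
  have hs : Summable (fun n : ℕ => tent^[n] (tent y) / 2^(n+1)) := by
    have := summable_takagi hy
    simpa only [Function.iterate_succ_apply] using this
  rw [h1, Summable.tsum_eq_zero_add hs]
  have : ∀ n : ℕ, tent^[n+1] (tent y) / 2^(n+1+1) = (tent^[n+1] (tent y) / 2^(n+1))/2 := by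
    intro n; rw [div_div]; ring_nf
  rw [tsum_congr this, tsum_div_const]
  rw [show takagi (tent y) = ∑' (n : ℕ), tent^[n + 1] (tent y) / 2 ^ (n + 1) from rfl]
  norm_num

lemma takagi_symm {z : ℝ} : takagi (1 - z) = takagi z := by
  apply tsum_congr
  intro n
  congr 1
  rw [Function.iterate_succ_apply, Function.iterate_succ_apply]
  congr 1
  simp only [tent]
  rw [min_comm]
  ring_nf

lemma takagi_left {y : ℝ} (h0 : 0 ≤ y) (h1 : y ≤ 1/2) :
    takagi y = y + takagi (2*y) / 2 := by
  have ht : tent y = 2*y := min_eq_left (by linarith)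
  have := takagi_rec (y := y) ⟨h0, by linarith⟩
  rw [ht] at this
  linarith [this]

lemma takagi_right {y : ℝ} (h0 : 1/2 ≤ y) (h1 : y ≤ 1) :
    takagi y = (1 - y) + takagi (2*y - 1) / 2 := by
  have ht : tent y = 2 - 2*y := min_eq_right (by linarith)
  have := takagi_rec (y := y) ⟨by linarith, h1⟩
  rw [ht] at this
  have hsym : takagi (2 - 2*y) = takagi (2*y - 1) := by
    have : (2:ℝ) - 2*y = 1 - (2*y - 1) := by ring
    rw [this, takagi_symm]
  rw [hsym] at this
  linarith [this]

noncomputable def Gm (y : ℝ) : ℝ := if y < 1/2 then 2*y else 2*y - 1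
noncomputable def dig (y : ℝ) : ℝ := if y < 1/2 then 1 else -1
noncomputable def sfn (m : ℕ) (y : ℝ) : ℝ := ∑ i ∈ Finset.range m, dig (Gm^[i] y)

lemma Gm_mem {y : ℝ} (hy : y ∈ Set.Ico (0:ℝ) 1) : Gm y ∈ Set.Ico (0:ℝ) 1 := by
  obtain ⟨h0, h1⟩ := hy
  unfold Gm
  split <;> constructor <;> first | linarith | (rename_i h; push_neg at h; linarith)

lemma Gm_iter_mem {y : ℝ} (hy : y ∈ Set.Ico (0:ℝ) 1) (n : ℕ) : Gm^[n] y ∈ Set.Ico (0:ℝ) 1 := by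
  induction n with
  | zero => simpa using hy
  | succ n ih => rw [Function.iterate_succ_apply']; exact Gm_mem ih

lemma gap_step {z : ℝ} (hz : z ∈ Set.Ico (0:ℝ) 1) : (1 - Gm z)/2 ≤ 1 - z := by
  unfold Gm; split <;> [skip; rename_i h] <;> obtain ⟨h0,h1⟩ := hz <;> linarith

lemma gap_le {z : ℝ} (hz : z ∈ Set.Ico (0:ℝ) 1) (m : ℕ) :
    (1 - Gm^[m] z)/2^m ≤ 1 - z := by
  induction m with
  | zero => simp
  | succ m ih =>
    have hmem := Gm_iter_mem hz m
    have h1 := gap_step hmem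
    rw [Function.iterate_succ_apply']
    calc (1 - Gm (Gm^[m] z))/2^(m+1) = ((1 - Gm (Gm^[m] z))/2)/2^m := by ring
      _ ≤ (1 - Gm^[m] z)/2^m := by
          apply div_le_div_of_nonneg_right h1 (by positivity) |>.trans_eq rfl
      _ ≤ 1 - z := ih

lemma sfn_succ' (m : ℕ) (y : ℝ) : sfn (m+1) y = dig y + sfn m (Gm y) := by
  unfold sfn
  rw [Finset.sum_range_succ']
  simp only [Function.iterate_zero_apply, Function.iterate_succ_apply]
  ring

lemma sfn_succ (m : ℕ) (y : ℝ) : sfn (m+1) y = sfn m y + dig (Gm^[m] y) := by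
  unfold sfn; rw [Finset.sum_range_succ]

lemma sfn_cocycle (m j : ℕ) (y : ℝ) : sfn (m+j) y = sfn m y + sfn j (Gm^[m] y) := by
  induction j with
  | zero => simp [sfn]
  | succ j ih =>
    rw [show m + (j+1) = (m+j) + 1 from rfl, sfn_succ, ih, sfn_succ]
    rw [show m + j = j + m from by ring, Function.iterate_add_apply]
    ring

lemma one_step {y h : ℝ} (hy : y ∈ Set.Ico (0:ℝ) 1) (hh : 0 ≤ h) (hub : Gm y + 2*h ≤ 1) :
    takagi (y+h) - takagi y = dig y * h + (takagi (Gm y + 2*h) - takagi (Gm y))/2 := by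
  obtain ⟨h0, h1⟩ := hy
  by_cases hc : y < 1/2
  · have hG : Gm y = 2*y := if_pos hc
    rw [hG] at hub ⊢
    have hyh : y + h ≤ 1/2 := by linarith
    have e1 := takagi_left (y := y+h) (by linarith) hyh
    have e2 := takagi_left (y := y) h0 (le_of_lt hc)
    have hd : dig y = 1 := if_pos hc
    rw [e1, e2, hd]
    have : 2*(y+h) = 2*y + 2*h := by ring
    rw [this]; ring
  · have hG : Gm y = 2*y - 1 := if_neg hc
    push_neg at hc
    rw [hG] at hub ⊢
    have hyh : y + h ≤ 1 := by linarith
    have e1 := takagi_right (y := y+h) (by linarith) hyh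
    have e2 := takagi_right (y := y) hc (le_of_lt h1)
    have hd : dig y = -1 := if_neg (not_lt.mpr hc)
    rw [e1, e2, hd]
    have : 2*(y+h) - 1 = 2*y - 1 + 2*h := by ring
    rw [this]; ring

lemma iter_identity {x : ℝ} (hx : x ∈ Set.Ico (0:ℝ) 1) (m : ℕ) :
    ∀ h : ℝ, 0 ≤ h → Gm^[m] x + 2^m * h ≤ 1 →
    takagi (x+h) - takagi x
      = sfn m x * h + (takagi (Gm^[m] x + 2^m*h) - takagi (Gm^[m] x))/2^m := by
  induction m generalizing x with
  | zero => intro h hh hub; simp [sfn]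
  | succ m ih =>
    intro h hh hub
    rw [Function.iterate_succ_apply] at hub ⊢
    have hGx := Gm_mem hx
    -- first: Gm x + 2*h ≤ 1
    have hgap : (1 - Gm^[m] (Gm x))/2^m ≤ 1 - Gm x := gap_le hGx m
    have hub1 : Gm x + 2*h ≤ 1 := by
      have h2 : 2^m * (2*h) ≤ 1 - Gm^[m] (Gm x) := by
        have : (2:ℝ)^(m+1) = 2^m * 2 := by ring
        rw [this] at hub; linarith
      have h3 : 2*h ≤ (1 - Gm^[m] (Gm x))/2^m := by
        rw [le_div_iff₀ (by positivity : (0:ℝ) < 2^m)]; linarith [h2]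
      linarith
    have e1 := one_step hx hh hub1
    have e2 := ih hGx (2*h) (by linarith) (by rw [show (2:ℝ)^m * (2*h) = 2^(m+1)*h from by ring]; exact hub)
    rw [show Gm x + 2*h = Gm x + (2*h) from rfl] at e1
    rw [e1, e2, sfn_succ']
    have : Gm^[m] (Gm x) + 2^m * (2*h) = Gm^[m] (Gm x) + 2^(m+1) * h := by ring
    rw [this]
    field_simp
    ring

lemma takagi_upper_aux (k : ℕ) : ∀ y ∈ Set.Ico (0:ℝ) 1, ∀ K : ℝ, 0 ≤ K →
    (∀ j, -K ≤ sfn j y) → takagi y ≤ (1-y)*(2+K) + (1/2:ℝ)^k := by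
  induction k with
  | zero =>
    intro y hy K hK _
    have h1 := takagi_le_one (Set.mem_Icc.mpr ⟨hy.1, hy.2.le⟩)
    have : (0:ℝ) ≤ (1-y)*(2+K) := by
      apply mul_nonneg <;> [linarith [hy.2]; linarith]
    simpa using by linarith
  | succ k ih =>
    intro y hy K hK hs
    obtain ⟨h0, h1⟩ := hy
    by_cases hc : y < 1/2
    · have hG : Gm y = 2*y := if_pos hc
      have hd : dig y = 1 := if_pos hc
      have h2y : (2*y) ∈ Set.Ico (0:ℝ) 1 := by rw [← hG]; exact Gm_mem ⟨h0, h1⟩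
      have hs' : ∀ j, -(K+1) ≤ sfn j (2*y) := by
        intro j
        have := hs (j+1)
        rw [sfn_succ', hd, hG] at this
        linarith
      have ihh := ih (2*y) h2y (K+1) (by linarith) hs'
      have e := takagi_left h0 hc.le
      rw [e]
      have : (1/2:ℝ)^(k+1) = (1/2)^k / 2 := by ring
      rw [this]
      nlinarith [ihh]
    · push_neg at hc
      have hG : Gm y = 2*y - 1 := if_neg (not_lt.mpr hc)
      have hd : dig y = -1 := if_neg (not_lt.mpr hc)
      have hK1 : 1 ≤ K := by
        have := hs 1
        rw [show sfn 1 y = dig y from by simp [sfn], hd] at this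
        linarith
      have h2y : (2*y - 1) ∈ Set.Ico (0:ℝ) 1 := by rw [← hG]; exact Gm_mem ⟨h0, h1⟩
      have hs' : ∀ j, -(K-1) ≤ sfn j (2*y-1) := by
        intro j
        have := hs (j+1)
        rw [sfn_succ', hd, hG] at this
        linarith
      have ihh := ih (2*y-1) h2y (K-1) (by linarith) hs'
      have e := takagi_right hc h1.le
      rw [e]
      have : (1/2:ℝ)^(k+1) = (1/2)^k / 2 := by ring
      rw [this]
      nlinarith [ihh]

lemma takagi_upper {y : ℝ} (hy : y ∈ Set.Ico (0:ℝ) 1) {K : ℝ} (hK : 0 ≤ K)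
    (hs : ∀ j, -K ≤ sfn j y) : takagi y ≤ (1-y)*(2+K) := by
  apply le_of_forall_pos_le_add
  intro ε hε
  obtain ⟨k, hk⟩ := exists_pow_lt_of_lt_one hε (by norm_num : (1/2:ℝ) < 1)
  have := takagi_upper_aux k y hy K hK hs
  linarith

lemma crossing_est {u η K : ℝ} (h0 : 0 ≤ u) (hu : u < 1/2) (hη : 1/2 - u < η)
    (hub : u + η ≤ 1) (hK : 0 ≤ K) (hs : ∀ j, -K ≤ sfn j (2*u)) :
    -(η*(1+K)) ≤ takagi (u+η) - takagi u := by
  have h2u : (2*u) ∈ Set.Ico (0:ℝ) 1 := ⟨by linarith, by linarith⟩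
  have e1 := takagi_left h0 hu.le
  have e2 := takagi_right (y := u+η) (by linarith) hub
  have hA := takagi_upper h2u hK hs
  have hpos : 0 ≤ takagi (2*(u+η) - 1) :=
    takagi_nonneg ⟨by linarith, by linarith⟩
  nlinarith [mul_nonneg hK (by linarith : (0:ℝ) ≤ η - (1 - 2*u)/2)]

noncomputable def tl (a : ℕ → ℕ) (i : ℕ) : ℝ := ∑' n, if i < a n then (1/2:ℝ)^(a n) else 0

section digits
variable {a : ℕ → ℕ} (ha : StrictMono a) (ha1 : 1 ≤ a 0)

include ha ha1 in
lemma han : ∀ n, n + 1 ≤ a n := by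
  intro n
  induction n with
  | zero => exact ha1
  | succ n ih => have := ha (show n < n + 1 by omega); omega

include ha in
lemma ha_shift (n0 : ℕ) : ∀ n, a n0 + n ≤ a (n0 + n) := by
  intro n
  induction n with
  | zero => simp
  | succ n ih => have := ha (show n0 + n < n0 + (n+1) by omega); omega

include ha ha1 in
lemma summable_pow_a : Summable (fun n : ℕ => (1/2:ℝ)^(a n)) := by
  apply Summable.of_nonneg_of_le (fun n => by positivity)
    (fun n => pow_le_pow_of_le_one (by norm_num) (by norm_num)
      (le_trans (Nat.le_succ n) (han ha ha1 n)))
  exact summable_geometric_of_lt_one (by norm_num) (by norm_num)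

include ha ha1 in
lemma summable_tl (i : ℕ) : Summable (fun n : ℕ => if i < a n then (1/2:ℝ)^(a n) else 0) := by
  apply Summable.of_nonneg_of_le (fun n => by positivity) (fun n => ?_) (summable_pow_a ha ha1)
  split
  · exact le_rfl
  · positivity

include ha ha1 in
lemma tl_pos (i : ℕ) : 0 < tl a i := by
  apply Summable.tsum_pos (summable_tl ha ha1 i) (fun n => by positivity) i
  rw [if_pos (by have := han ha ha1 i; omega)]
  positivity

open Classical in
include ha ha1 in
lemma tl_split (i : ℕ) :
    tl a i = (if ∃ n, a n = i+1 then ((1/2:ℝ))^(i+1) else 0) + tl a (i+1) := by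
  have hterm : ∀ n, (if i < a n then (1/2:ℝ)^(a n) else 0)
      = (if a n = i+1 then (1/2:ℝ)^(a n) else 0) + (if i+1 < a n then (1/2:ℝ)^(a n) else 0) := by
    intro n
    rcases lt_trichotomy (a n) (i+1) with h | h | h
    · rw [if_neg (by omega), if_neg (by omega), if_neg (by omega)]; ring
    · rw [if_pos (by omega), if_pos h, if_neg (by omega)]; ring
    · rw [if_pos (by omega), if_neg (by omega), if_pos h]; ring
  have hs1 : Summable (fun n => if a n = i+1 then (1/2:ℝ)^(a n) else 0) := by
    apply Summable.of_nonneg_of_le (fun n => by positivity) (fun n => ?_) (summable_pow_a ha ha1)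
    split
    · exact le_rfl
    · positivity
  unfold tl
  rw [tsum_congr hterm, Summable.tsum_add hs1 (summable_tl ha ha1 (i+1))]
  congr 1
  by_cases hex : ∃ n, a n = i+1
  · obtain ⟨n0, hn0⟩ := hex
    rw [tsum_eq_single n0 (fun b hb => ?_), if_pos hn0, hn0, if_pos ⟨n0, hn0⟩]
    rw [if_neg]
    intro hc
    exact hb (ha.injective (hn0 ▸ hc))
  · rw [if_neg hex, tsum_congr (g := fun _ => (0:ℝ)) (fun n => if_neg (fun hc => hex ⟨n, hc⟩)),
      tsum_zero]

include ha ha1 in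
lemma tl_le (i : ℕ) : tl a i ≤ (1/2:ℝ)^i := by
  classical
  have hex : ∃ n, i < a n := ⟨i, by have := han ha ha1 i; omega⟩
  obtain ⟨n0, hn0spec, hn0min⟩ : ∃ n0, i < a n0 ∧ ∀ k, k < n0 → ¬ i < a k :=
    ⟨Nat.find hex, Nat.find_spec hex, fun k hk => Nat.find_min hex hk⟩
  set f : ℕ → ℝ := fun n => if i < a n then (1/2:ℝ)^(a n) else 0 with hf
  have hsupp : Function.support f ⊆ Set.range (fun n => n0 + n) := by
    intro k hk
    have hik : i < a k := by
      by_contra hc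
      exact hk (by simp [hf, if_neg hc])
    have hle : n0 ≤ k := by
      by_contra hc
      exact hn0min k (by omega) hik
    exact ⟨k - n0, by show n0 + (k - n0) = k; omega⟩
  have hinj : Function.Injective (fun n : ℕ => n0 + n) := add_right_injective n0
  have heq : tl a i = ∑' n, f (n0 + n) := (hinj.tsum_eq hsupp).symm
  rw [heq]
  have hbound : ∀ n, f (n0 + n) ≤ (1/2:ℝ)^(i+1) * (1/2)^n := by
    intro n
    have hsh := ha_shift ha n0 n
    have h1 : i + 1 + n ≤ a (n0 + n) := by omega
    have h2 : (1/2:ℝ)^(a (n0+n)) ≤ (1/2:ℝ)^(i+1+n) :=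
      pow_le_pow_of_le_one (by norm_num) (by norm_num) h1
    rw [pow_add] at h2
    simp only [hf]
    split
    · exact h2
    · positivity
  calc ∑' n, f (n0 + n) ≤ ∑' n : ℕ, (1/2:ℝ)^(i+1) * (1/2)^n := by
        apply Summable.tsum_le_tsum hbound ((summable_tl ha ha1 i).comp_injective hinj)
        exact (summable_geometric_of_lt_one (by norm_num) (by norm_num)).mul_left _
    _ = (1/2:ℝ)^i := by
        rw [tsum_mul_left, tsum_geometric_of_lt_one (by norm_num) (by norm_num)]
        rw [pow_succ]
        ring
end digits

section digits
variable {a : ℕ → ℕ} (ha : StrictMono a) (ha1 : 1 ≤ a 0)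
variable {x : ℝ} (hxa : x = ∑' n : ℕ, (1/2 : ℝ)^(a n))

include ha ha1 hxa in
lemma tl_zero : tl a 0 = x := by
  rw [hxa]
  exact tsum_congr fun n => if_pos (by have := han ha ha1 n; omega)

include ha ha1 hxa in
lemma head_int (i : ℕ) : ∃ K : ℤ, x = (K:ℝ)/2^i + tl a i := by
  classical
  have hsub : x - tl a i = ∑' n, (if i < a n then (0:ℝ) else (1/2)^(a n)) := by
    rw [hxa]
    unfold tl
    rw [← Summable.tsum_sub (summable_pow_a ha ha1) (summable_tl ha ha1 i)]
    apply tsum_congr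
    intro n
    split <;> ring
  have hvan : ∀ n ∉ Finset.range i, (if i < a n then (0:ℝ) else (1/2)^(a n)) = 0 := by
    intro n hn
    rw [Finset.mem_range, not_lt] at hn
    rw [if_pos (by have := han ha ha1 n; omega)]
  rw [tsum_eq_sum hvan] at hsub
  refine ⟨∑ n ∈ Finset.range i, if a n ≤ i then (2:ℤ)^(i - a n) else 0, ?_⟩
  have : ((∑ n ∈ Finset.range i, if a n ≤ i then (2:ℤ)^(i - a n) else 0 : ℤ) : ℝ)/2^i
      = ∑ n ∈ Finset.range i, (if i < a n then (0:ℝ) else (1/2)^(a n)) := by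
    push_cast
    rw [Finset.sum_div]
    apply Finset.sum_congr rfl
    intro n _
    by_cases hc : a n ≤ i
    · rw [if_pos hc, if_neg (by omega)]
      have hpow : (2:ℝ)^(i - a n) * 2^(a n) = 2^i := by
        rw [← pow_add, Nat.sub_add_cancel hc]
      rw [div_eq_iff (by positivity), div_pow, one_pow, div_mul_eq_mul_div,
        eq_div_iff (by positivity), one_mul, hpow]
    · rw [if_neg hc, if_pos (by omega)]
      simp
  rw [this]
  linarith [hsub]

include ha ha1 hxa in
lemma tl_ne (i : ℕ) (hnd : ¬ IsDyadic x) :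
    tl a i ≠ (1/2:ℝ)^(i+1) ∧ tl a i ≠ (1/2:ℝ)^i := by
  obtain ⟨K, hK⟩ := head_int ha ha1 hxa i
  constructor
  · intro hc
    apply hnd
    refine ⟨2*K + 1, i+1, ?_⟩
    rw [hK, hc]
    push_cast
    rw [pow_succ]
    rw [div_pow, one_pow]
    field_simp
    try ring
  · intro hc
    apply hnd
    refine ⟨K + 1, i, ?_⟩
    rw [hK, hc]
    push_cast
    rw [div_pow, one_pow]
    field_simp
    try ring

open Classical in
include ha ha1 hxa in
lemma orbit_eq (hnd : ¬ IsDyadic x) : ∀ i, Gm^[i] x = 2^i * tl a i := by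
  intro i
  induction i with
  | zero => simp [tl_zero ha ha1 hxa]
  | succ i ih =>
    rw [Function.iterate_succ_apply', ih]
    have hone : (2:ℝ)^i * (1/2)^i = 1 := by rw [← mul_pow]; norm_num
    have h2 : (2:ℝ)^i * (1/2)^(i+1) = 1/2 := by
      rw [pow_succ, ← mul_assoc, hone, one_mul]
    have hppos : (0:ℝ) < 2^i := pow_pos (by norm_num) i
    by_cases hex : ∃ n, a n = i+1
    · have hsplit := tl_split ha ha1 i
      rw [if_pos hex] at hsplit
      have hpos := tl_pos ha ha1 (i+1)
      have hkey : (2:ℝ)^i * tl a i = 1/2 + 2^i * tl a (i+1) := by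
        linear_combination ((2:ℝ)^i) * hsplit + h2
      have hgt : (1/2:ℝ) < 2^i * tl a i := by nlinarith [mul_pos hppos hpos]
      rw [Gm, if_neg (not_lt.mpr hgt.le)]
      linear_combination 2 * hkey
    · have hsplit := tl_split ha ha1 i
      rw [if_neg hex, zero_add] at hsplit
      have hle : tl a i ≤ (1/2:ℝ)^(i+1) := hsplit ▸ tl_le ha ha1 (i+1)
      have hne : tl a i ≠ (1/2:ℝ)^(i+1) := (tl_ne ha ha1 hxa i hnd).1
      have hlt : 2^i * tl a i < 1/2 := by
        have h3 : tl a i < (1/2:ℝ)^(i+1) := lt_of_le_of_ne hle hne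
        nlinarith
      rw [Gm, if_pos hlt]
      linear_combination (2 * (2:ℝ)^i) * hsplit

include ha ha1 hxa in
lemma digit_iff (hnd : ¬ IsDyadic x) (i : ℕ) :
    Gm^[i] x < 1/2 ↔ ¬ ∃ n, a n = i+1 := by
  classical
  rw [orbit_eq ha ha1 hxa hnd i]
  have hone : (2:ℝ)^i * (1/2)^i = 1 := by rw [← mul_pow]; norm_num
  have h2 : (2:ℝ)^i * (1/2)^(i+1) = 1/2 := by
    rw [pow_succ, ← mul_assoc, hone, one_mul]
  have hppos : (0:ℝ) < 2^i := pow_pos (by norm_num) i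
  constructor
  · intro hlt hex
    have hsplit := tl_split ha ha1 i
    rw [if_pos hex] at hsplit
    have hpos := tl_pos ha ha1 (i+1)
    have hkey : (2:ℝ)^i * tl a i = 1/2 + 2^i * tl a (i+1) := by
      linear_combination ((2:ℝ)^i) * hsplit + h2
    nlinarith [mul_pos hppos hpos]
  · intro hex
    have hsplit := tl_split ha ha1 i
    rw [if_neg hex, zero_add] at hsplit
    have hle : tl a i ≤ (1/2:ℝ)^(i+1) := hsplit ▸ tl_le ha ha1 (i+1)
    have hne : tl a i ≠ (1/2:ℝ)^(i+1) := (tl_ne ha ha1 hxa i hnd).1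
    have h3 : tl a i < (1/2:ℝ)^(i+1) := lt_of_le_of_ne hle hne
    nlinarith

include ha ha1 hxa in
lemma orbit_lt_one (hnd : ¬ IsDyadic x) (i : ℕ) : Gm^[i] x < 1 ∧ 0 < Gm^[i] x := by
  rw [orbit_eq ha ha1 hxa hnd i]
  have hle : tl a i ≤ (1/2:ℝ)^i := tl_le ha ha1 i
  have hne : tl a i ≠ (1/2:ℝ)^i := (tl_ne ha ha1 hxa i hnd).2
  have hpos := tl_pos ha ha1 i
  have h2 : (2:ℝ)^i * (1/2)^i = 1 := by
    rw [← mul_pow]; norm_num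
  constructor
  · nlinarith [pow_pos (show (0:ℝ) < 2 by norm_num) i, lt_of_le_of_ne hle hne]
  · positivity
end digits

section counting
variable {a : ℕ → ℕ} (ha : StrictMono a) (ha1 : 1 ≤ a 0) {x : ℝ}
  (hdig : ∀ i, Gm^[i] x < 1/2 ↔ ¬ ∃ n, a n = i+1)

include ha ha1 hdig in
lemma sfn_count (m n : ℕ) (hnm : a n ≤ m) (hmax : ∀ j, a j ≤ m → j ≤ n) :
    sfn m x = (m : ℝ) - 2*(n+1) := by
  classical
  have hterm : ∀ i, dig (Gm^[i] x) = 1 - 2 * (if ∃ j, a j = i+1 then (1:ℝ) else 0) := by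
    intro i
    by_cases hex : ∃ j, a j = i+1
    · rw [if_pos hex]
      have : ¬ Gm^[i] x < 1/2 := fun hc => ((hdig i).mp hc) hex
      rw [dig, if_neg this]; ring
    · rw [if_neg hex]
      rw [dig, if_pos ((hdig i).mpr hex)]; ring
  unfold sfn
  rw [Finset.sum_congr rfl (fun i _ => hterm i), Finset.sum_sub_distrib]
  rw [← Finset.mul_sum, Finset.sum_boole]
  have hcard : ((Finset.range m).filter (fun i => ∃ j, a j = i+1)).card = n+1 := by
    have himg : (Finset.range m).filter (fun i => ∃ j, a j = i+1)
        = (Finset.range (n+1)).image (fun j => a j - 1) := by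
      ext i
      simp only [Finset.mem_filter, Finset.mem_range, Finset.mem_image]
      constructor
      · rintro ⟨him, j, hj⟩
        have hjn : j ≤ n := hmax j (by omega)
        exact ⟨j, by omega, by omega⟩
      · rintro ⟨j, hj, hij⟩
        have h1 : 1 ≤ a j := by have := han ha ha1 j; omega
        have haj : a j ≤ a n := ha.monotone (by omega)
        refine ⟨by omega, j, by omega⟩
    rw [himg, Finset.card_image_of_injOn, Finset.card_range]
    intro p hp q hq hpq
    have hpq' : a p - 1 = a q - 1 := hpq
    have h1 : 1 ≤ a p := by have := han ha ha1 p; omega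
    have h2 : 1 ≤ a q := by have := han ha ha1 q; omega
    exact ha.injective (by omega)
  rw [hcard, Finset.sum_const, Finset.card_range]
  push_cast
  ring
end counting

theorem takagi_rightDeriv_top_iff (x : ℝ) (hx : x ∈ Set.Ioo (0:ℝ) 1) (hnd : ¬ IsDyadic x)
    (a : ℕ → ℕ) (ha : StrictMono a) (ha1 : 1 ≤ a 0)
    (hxa : x = ∑' n : ℕ, (1/2 : ℝ)^(a n)) :
    Tendsto (fun h => (takagi (x + h) - takagi x) / h) (𝓝[>] (0:ℝ)) atTop ↔
      Tendsto (fun n : ℕ => (a n : ℝ) - 2 * (n + 1)) atTop atTop := by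
  classical
  obtain ⟨hx0, hx1⟩ := hx
  have hxI : x ∈ Set.Ico (0:ℝ) 1 := ⟨hx0.le, hx1⟩
  have hdig := digit_iff ha ha1 hxa hnd
  have horb := orbit_lt_one ha ha1 hxa hnd
  set gap : ℕ → ℝ := fun m => (1 - Gm^[m] x)/2^m with hgap_def
  have hgap_pos : ∀ m, 0 < gap m := by
    intro m
    have h1 := (horb m).1
    have : (0:ℝ) < 1 - Gm^[m] x := by linarith
    positivity
  have hgap_le : ∀ m, gap m ≤ (1/2:ℝ)^m := by
    intro m
    have h2 := (horb m).2
    rw [hgap_def]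
    simp only []
    rw [div_le_iff₀ (by positivity : (0:ℝ) < 2^m)]
    have : (1/2:ℝ)^m * 2^m = 1 := by rw [← mul_pow]; norm_num
    rw [this]
    linarith
  have hgap_anti : ∀ p q : ℕ, p ≤ q → gap q ≤ gap p := by
    intro p q hpq
    have horbp : Gm^[p] x ∈ Set.Ico (0:ℝ) 1 := ⟨(horb p).2.le, (horb p).1⟩
    have key := gap_le horbp (q - p)
    have hq : Gm^[q] x = Gm^[q-p] (Gm^[p] x) := by
      rw [← Function.iterate_add_apply]
      congr 1
      omega
    rw [hgap_def]
    simp only []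
    rw [hq]
    have hsplit : (2:ℝ)^q = 2^(q-p) * 2^p := by
      rw [← pow_add]
      congr 1
      omega
    rw [hsplit]
    rw [div_le_div_iff₀ (by positivity) (by positivity)]
    rw [div_le_iff₀ (by positivity : (0:ℝ) < 2^(q-p))] at key
    nlinarith [pow_pos (show (0:ℝ) < 2 by norm_num) p]
  constructor
  · -- hard-to-state direction: T'⁺ = ∞ → a n - 2(n+1) → ∞
    intro hT
    by_contra hnot
    rw [tendsto_atTop] at hnot
    push_neg at hnot
    obtain ⟨C, hC⟩ := hnot
    have hC' : ∃ᶠ n in atTop, (a n : ℝ) - 2*(n+1) < C := hC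
    obtain ⟨φ, hφmono, hφ⟩ := Filter.extraction_of_frequently_atTop hC'
    set hs : ℕ → ℝ := fun k => gap (a (φ k)) with hhs
    have hspos : ∀ k, 0 < hs k := fun k => hgap_pos _
    have hsle : ∀ k, hs k ≤ (1/2:ℝ)^k := by
      intro k
      calc hs k ≤ (1/2:ℝ)^(a (φ k)) := hgap_le _
        _ ≤ (1/2:ℝ)^k := by
            apply pow_le_pow_of_le_one (by norm_num) (by norm_num)
            have h1 : k ≤ φ k := hφmono.le_apply
            have h2 := han ha ha1 (φ k)
            omega
    have hto : Tendsto hs atTop (𝓝[>] (0:ℝ)) := by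
      rw [tendsto_nhdsWithin_iff]
      constructor
      · apply squeeze_zero (fun k => (hspos k).le) hsle
        exact tendsto_pow_atTop_nhds_zero_of_lt_one (by norm_num) (by norm_num)
      · exact Filter.Eventually.of_forall (fun k => hspos k)
    have key : ∀ k, (takagi (x + hs k) - takagi x)/(hs k) ≤ C := by
      intro k
      set m := a (φ k) with hm
      have hub : Gm^[m] x + 2^m * hs k = 1 := by
        rw [hhs]
        simp only [← hm]
        rw [hgap_def]
        simp only []
        field_simp
        ring
      have hid := iter_identity hxI m (hs k) (hspos k).le (le_of_eq hub)
      rw [hub, takagi_one] at hid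
      have hTnn : 0 ≤ takagi (Gm^[m] x) :=
        takagi_nonneg ⟨(horb m).2.le, (horb m).1.le⟩
      have hcount : sfn m x = (m:ℝ) - 2*(φ k + 1) := by
        apply sfn_count ha ha1 hdig m (φ k) le_rfl
        intro j hj
        exact (ha.le_iff_le).mp hj
      have hlt : sfn m x < C := by
        rw [hcount]
        have := hφ k
        push_cast
        push_cast at this
        linarith
      rw [div_le_iff₀ (hspos k)]
      have h2m : (0:ℝ) < 2^m := by positivity
      have : (0 - takagi (Gm^[m] x))/2^m ≤ 0 := by
        apply div_nonpos_of_nonpos_of_nonneg _ h2m.le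
        linarith
      calc takagi (x + hs k) - takagi x ≤ sfn m x * hs k := by rw [hid]; linarith
        _ ≤ C * hs k := by
            apply mul_le_mul_of_nonneg_right hlt.le (hspos k).le
    have hcomp := hT.comp hto
    obtain ⟨k, hk⟩ := (hcomp.eventually_ge_atTop (C+1)).exists
    have := key k
    simp only [Function.comp_apply] at hk
    linarith
  · -- main direction
    intro hA
    have hS : ∀ M : ℝ, ∃ m1 : ℕ, ∀ m, m1 ≤ m → M ≤ sfn m x := by
      intro M
      obtain ⟨n1, hn1⟩ := (hA.eventually_ge_atTop M).exists_forall_of_atTop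
      refine ⟨a n1, fun m hm => ?_⟩
      have hbd : ∀ j, a j ≤ m → j ≤ m := by
        intro j hj
        have := han ha ha1 j
        omega
      set n := Nat.findGreatest (fun j => a j ≤ m) m with hn
      have hn1m : n1 ≤ m := by
        have := han ha ha1 n1
        omega
      have hspec : a n ≤ m := by
        rw [hn]; exact Nat.findGreatest_spec (P := fun j => a j ≤ m) hn1m hm
      have hmax : ∀ j, a j ≤ m → j ≤ n := by
        intro j hj
        by_contra hc
        push_neg at hc
        exact Nat.findGreatest_is_greatest (P := fun j => a j ≤ m) (hn ▸ hc) (hbd j hj) hj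
      have hn1n : n1 ≤ n := hmax n1 hm
      have hcount := sfn_count ha ha1 hdig m n hspec hmax
      have hMn := hn1 n hn1n
      have hcast : (a n : ℝ) ≤ m := by exact_mod_cast hspec
      rw [hcount]
      push_cast at hMn ⊢
      linarith
    rw [tendsto_atTop]
    intro M
    obtain ⟨m1, hm1⟩ := hS (M + 2)
    filter_upwards [Ioo_mem_nhdsGT_of_mem (show (0:ℝ) ∈ Set.Ico 0 (gap m1) from ⟨le_rfl, hgap_pos m1⟩)] with h hh
    obtain ⟨hh0, hh1⟩ := hh
    obtain ⟨m2, hm2⟩ := exists_pow_lt_of_lt_one hh0 (show (1/2:ℝ) < 1 by norm_num)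
    have hgapm2 : gap m2 < h := lt_of_le_of_lt (hgap_le m2) hm2
    have hm1m2 : m1 ≤ m2 := by
      by_contra hc
      push_neg at hc
      have := hgap_anti m2 m1 hc.le
      linarith
    set m := Nat.findGreatest (fun j => h ≤ gap j) m2 with hmdef
    have hPm : h ≤ gap m := by
      rw [hmdef]; exact Nat.findGreatest_spec (P := fun j => h ≤ gap j) hm1m2 hh1.le
    have hmm2 : m < m2 := by
      have h1 : m ≤ m2 := Nat.findGreatest_le m2
      rcases lt_or_eq_of_le h1 with h2 | h2
      · exact h2
      · rw [h2] at hPm; linarith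
    have hglt : gap (m+1) < h := by
      have := Nat.findGreatest_is_greatest (P := fun j => h ≤ gap j)
        (hmdef ▸ Nat.lt_succ_self m) (by omega : m+1 ≤ m2)
      exact not_le.mp this
    have hm1le : m1 ≤ m := by
      by_contra hc
      push_neg at hc
      exact Nat.findGreatest_is_greatest (P := fun j => h ≤ gap j) (hmdef ▸ hc) (by omega) hh1.le
    set u := Gm^[m] x with hu_def
    have hu0 : 0 < u := (horb m).2
    have hu1 : u < 1 := (horb m).1
    have hgap_succ : gap (m+1) = (1 - Gm u)/2^(m+1) := by
      rw [hgap_def]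
      simp only []
      rw [Function.iterate_succ_apply']
    have hu_half : u < 1/2 := by
      by_contra hc
      push_neg at hc
      have hGu : Gm u = 2*u - 1 := if_neg (not_lt.mpr hc)
      have : gap (m+1) = gap m := by
        rw [hgap_succ, hGu, hgap_def]
        simp only []
        rw [pow_succ]
        field_simp
        ring
      linarith
    have hGu : Gm u = 2*u := if_pos hu_half
    set η := 2^m * h with hη_def
    have h2m : (0:ℝ) < 2^m := by positivity
    have hη1 : 1/2 - u < η := by
      have : gap (m+1) = (1 - 2*u)/2^(m+1) := by rw [hgap_succ, hGu]
      rw [this] at hglt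
      rw [div_lt_iff₀ (by positivity : (0:ℝ) < 2^(m+1))] at hglt
      rw [pow_succ] at hglt
      nlinarith
    have hub : u + η ≤ 1 := by
      have : gap m = (1 - u)/2^m := by rw [hgap_def]
      rw [this] at hPm
      rw [le_div_iff₀ h2m] at hPm
      nlinarith
    set K := sfn (m+1) x - (M+2) with hK_def
    have hK0 : 0 ≤ K := by
      have := hm1 (m+1) (by omega)
      rw [hK_def]
      linarith
    have hsK : ∀ j, -K ≤ sfn j (2*u) := by
      intro j
      rw [← hGu]
      have hco := sfn_cocycle (m+1) j x
      have hGmu : Gm^[m+1] x = Gm u := by rw [Function.iterate_succ_apply', hu_def]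
      rw [hGmu] at hco
      have hge := hm1 (m+1+j) (by omega)
      rw [hK_def]
      linarith
    have hcross := crossing_est hu0.le hu_half hη1 hub hK0 hsK
    have hid := iter_identity hxI m h hh0.le (by rw [← hη_def]; linarith [hub])
    have hdigu : dig u = 1 := if_pos hu_half
    have hsucc : sfn (m+1) x = sfn m x + 1 := by
      rw [sfn_succ, ← hu_def, hdigu]
    rw [le_div_iff₀ hh0]
    have hfrac : -(h*(1+K)) ≤ (takagi (u + η) - takagi u)/2^m := by
      rw [le_div_iff₀ h2m]
      calc -(h*(1+K)) * 2^m = -(η*(1+K)) := by rw [hη_def]; ring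
        _ ≤ takagi (u+η) - takagi u := hcross
    have : takagi (x+h) - takagi x ≥ sfn m x * h - h*(1+K) := by
      rw [hid, ← hu_def, ← hη_def]
      linarith [hfrac]
    have hfin : sfn m x - (1+K) = M := by
      rw [hK_def, hsucc]
      ring
    nlinarith [this, hfin, hh0]
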